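/- Let $N\geq 1$, $p>1$, $m\in C([0,1])$ with $m(r)\geq 0$ and $m\not\equiv 0$, and let $f\in C(\mathbb{R})$ with $f(s)s>0$ for $s\neq 0$. Let $\lambda_k^+(p)$ denote the consecutive positive eigenvalues of $(r^{N-1}\varphi_p(u'))' + \lambda r^{N-1}m(r)\varphi_p(u)=0$, $u'(0)=u(1)=0$. If $\gamma > 0$ and $\lambda_k^+(p) < \gamma f(s)/\varphi_p(s) < \lambda_{k+1}^+(p)$ for all $s\neq 0$, then the problem $(r^{N-1}\varphi_p(u'))' + \gamma r^{N-1}m(r)f(u)=0$, $u'(0)=u(1)=0$, has no nontrivial solution with exactly $k-1$ zeros nor with exactly $k$ zeros; more precisely, by Sturm comparison against the eigenvalue problems, any nontrivial solution would have a zero count strictly between those of the $k$-th and $(k+1)$-th eigenfunctions, which is impossible. -/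

import Mathlib

open MeasureTheory Set Filter

/-- `φ_p(s) = |s|^(p-2) s`. -/
noncomputable def phi (p s : ℝ) : ℝ := |s| ^ (p - 2) * s

/-- A solution of `(r^{N-1} φ_p(u'))' + F(r) = 0` on `[0,1]`, in integrated form. -/
def SolEq (p : ℝ) (N : ℕ) (F : ℝ → ℝ) (u u' : ℝ → ℝ) : Prop :=
  (∀ r ∈ Icc (0:ℝ) 1, HasDerivWithinAt u (u' r) (Icc (0:ℝ) 1) r) ∧
  ContinuousOn u' (Icc (0:ℝ) 1) ∧
  ∀ r ∈ Icc (0:ℝ) 1,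
    r ^ (N - 1) * phi p (u' r)
      = (0:ℝ) ^ (N - 1) * phi p (u' 0) - ∫ t in (0:ℝ)..r, F t

/-- `u` (with derivative `u'`) is a nontrivial solution of the eigenvalue problem
`(r^{N-1}|u'|^{p-2}u')' + λ m(r) r^{N-1} |u|^{p-2}u = 0`, `u'(0)=u(1)=0`. -/
def IsEigenfunc (p : ℝ) (N : ℕ) (m : ℝ → ℝ) (μ : ℝ) (u u' : ℝ → ℝ) : Prop :=
  SolEq p N (fun t => μ * m t * t ^ (N - 1) * phi p (u t)) u u' ∧
  u' 0 = 0 ∧ u 1 = 0 ∧ ∃ r ∈ Icc (0:ℝ) 1, u r ≠ 0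




section phiBasics
variable {p : ℝ}

lemma phi_zero : phi p 0 = 0 := by simp [phi]

lemma phi_neg (s : ℝ) : phi p (-s) = - phi p s := by
  unfold phi; rw [abs_neg]; ring

lemma phi_mul_self (hp : 1 < p) (s : ℝ) : phi p s * s = |s| ^ p := by
  rcases eq_or_ne s 0 with h | h
  · simp [h, phi, Real.zero_rpow (by linarith : p ≠ 0)]
  · have habs : (0:ℝ) < |s| := abs_pos.2 h
    have h2 : s * s = |s| ^ (2:ℝ) := by
      rw [show (2:ℝ) = ((2:ℕ):ℝ) by norm_num, Real.rpow_natCast, ← abs_mul_abs_self s]; ring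
    calc phi p s * s = |s| ^ (p-2) * (s * s) := by rw [phi]; ring
    _ = |s| ^ (p-2) * |s| ^ (2:ℝ) := by rw [h2]
    _ = |s| ^ p := by rw [← Real.rpow_add habs]; norm_num

lemma abs_phi (hp : 1 < p) (s : ℝ) : |phi p s| = |s| ^ (p - 1) := by
  rcases eq_or_ne s 0 with h | h
  · simp [h, phi, Real.zero_rpow (by linarith : p - 1 ≠ 0)]
  · have habs : (0:ℝ) < |s| := abs_pos.2 h
    rw [phi, abs_mul, abs_of_nonneg (Real.rpow_nonneg (abs_nonneg s) _),
      ← Real.rpow_add_one habs.ne']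
    congr 1; ring

lemma phi_pos_iff (hp : 1 < p) {s : ℝ} : 0 < phi p s ↔ 0 < s := by
  rcases lt_trichotomy s 0 with h | h | h
  · constructor
    · intro hc; exfalso
      have : phi p s < 0 := mul_neg_of_pos_of_neg (Real.rpow_pos_of_pos (abs_pos.2 h.ne) _) h
      linarith
    · intro hc; linarith
  · simp [h, phi]
  · constructor
    · intro _; exact h
    · intro _; exact mul_pos (Real.rpow_pos_of_pos (abs_pos.2 h.ne') _) h

lemma phi_eq_zero_iff (hp : 1 < p) {s : ℝ} : phi p s = 0 ↔ s = 0 := by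
  constructor
  · intro h
    by_contra hs
    exact (mul_ne_zero (Real.rpow_pos_of_pos (abs_pos.2 hs) (p - 2)).ne' hs) h
  · intro h; simp [h, phi]

lemma phi_neg_iff (hp : 1 < p) {s : ℝ} : phi p s < 0 ↔ s < 0 := by
  constructor
  · intro h
    rcases lt_trichotomy s 0 with h0 | h0 | h0
    · exact h0
    · exfalso; rw [h0, phi_zero] at h; linarith
    · exact absurd ((phi_pos_iff hp).2 h0) (by linarith)
  · intro h
    have := (phi_pos_iff hp (s := -s)).2 (by linarith)
    rw [phi_neg] at this; linarith

lemma phi_nonneg_iff (hp : 1 < p) {s : ℝ} : 0 ≤ phi p s ↔ 0 ≤ s := by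
  constructor
  · intro h; by_contra hs; push_neg at hs; exact absurd ((phi_neg_iff hp).2 hs) (by linarith)
  · intro h; rcases eq_or_lt_of_le h with h0 | h0
    · rw [← h0, phi_zero]
    · exact ((phi_pos_iff hp).2 h0).le

lemma phi_nonpos_iff (hp : 1 < p) {s : ℝ} : phi p s ≤ 0 ↔ s ≤ 0 := by
  constructor
  · intro h; by_contra hs; push_neg at hs; exact absurd ((phi_pos_iff hp).2 hs) (by linarith)
  · intro h; rcases eq_or_lt_of_le h with h0 | h0
    · rw [h0, phi_zero]
    · exact ((phi_neg_iff hp).2 h0).le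

lemma continuous_phi (hp : 1 < p) : Continuous (phi p) := by
  rw [continuous_iff_continuousAt]
  intro x
  rcases eq_or_ne x 0 with h | h
  · subst h
    rw [ContinuousAt, phi_zero]
    apply squeeze_zero_norm' (a := fun s : ℝ => |s| ^ (p-1))
    · filter_upwards with s
      rw [Real.norm_eq_abs, abs_phi hp]
    · have hc : ContinuousAt (fun s : ℝ => |s| ^ (p-1)) 0 := by
        apply ContinuousAt.comp (g := fun t : ℝ => t ^ (p-1))
        · exact Real.continuousAt_rpow_const _ _ (Or.inr (by linarith))
        · exact continuous_abs.continuousAt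
      have := hc.tendsto
      simpa [Real.zero_rpow (by linarith : p - 1 ≠ 0)] using this
  · apply ContinuousAt.mul _ continuousAt_id
    apply ContinuousAt.comp (g := fun t : ℝ => t ^ (p-2))
    · exact Real.continuousAt_rpow_const _ _ (Or.inl (by simpa using h))
    · exact continuous_abs.continuousAt

lemma phi_one : phi p 1 = 1 := by simp [phi]

lemma hasDerivAt_phi (hp : 1 < p) {x : ℝ} (hx : x ≠ 0) :
    HasDerivAt (phi p) ((p-1) * |x| ^ (p-2)) x := by
  rcases lt_or_gt_of_ne hx with h | h
  · have hev : (fun s => -((-s) ^ (p-1))) =ᶠ[nhds x] phi p := by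
      filter_upwards [eventually_lt_nhds h] with s hs
      have hns : (0:ℝ) < -s := by linarith
      rw [phi, abs_of_neg hs]
      rw [show p - 1 = (p - 2) + 1 by ring, Real.rpow_add_one hns.ne']
      ring
    have hd : HasDerivAt (fun s : ℝ => -((-s) ^ (p-1))) ((p-1) * |x|^(p-2)) x := by
      have h1 : HasDerivAt (fun s : ℝ => (-s)) (-1) x := (hasDerivAt_id x).neg
      have h2 : HasDerivAt (fun t : ℝ => t ^ (p-1)) ((p-1) * (-x) ^ (p-1-1)) (-x) :=
        Real.hasDerivAt_rpow_const (Or.inl (by linarith))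
      have := (h2.comp x h1).neg
      convert this using 1 <;> try rfl
      rw [abs_of_neg h, show p - 1 - 1 = p - 2 by ring]
      simp [Function.comp]; try ring
    exact hd.congr_of_eventuallyEq hev.symm
  · have hev : (fun s : ℝ => s ^ (p-1)) =ᶠ[nhds x] phi p := by
      filter_upwards [eventually_gt_nhds h] with s hs
      rw [phi, abs_of_pos hs, show p - 1 = (p-2) + 1 by ring, Real.rpow_add_one hs.ne']
      try ring
    have hd : HasDerivAt (fun s : ℝ => s ^ (p-1)) ((p-1) * |x|^(p-2)) x := by
      have := Real.hasDerivAt_rpow_const (x := x) (p := p - 1) (Or.inl (ne_of_gt h))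
      convert this using 2
      all_goals try (rw [abs_of_pos h]; try (congr 1; ring))
      all_goals try ring
    exact hd.congr_of_eventuallyEq hev.symm

lemma hasDerivAt_abs_rpow' (hp : 1 < p) {x : ℝ} (hx : x ≠ 0) :
    HasDerivAt (fun s : ℝ => |s| ^ p) (p * phi p x) x := by
  rcases lt_or_gt_of_ne hx with h | h
  · have hev : (fun s : ℝ => (-s) ^ p) =ᶠ[nhds x] (fun s => |s| ^ p) := by
      filter_upwards [eventually_lt_nhds h] with s hs
      rw [abs_of_neg hs]
    have h1 : HasDerivAt (fun s : ℝ => (-s)) (-1) x := (hasDerivAt_id x).neg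
    have h2 : HasDerivAt (fun t : ℝ => t ^ p) (p * (-x) ^ (p-1)) (-x) :=
      Real.hasDerivAt_rpow_const (Or.inl (by linarith))
    have h3 := h2.comp x h1
    refine HasDerivAt.congr_of_eventuallyEq ?_ hev.symm
    convert h3 using 1 <;> try rfl
    rw [phi, abs_of_neg h, show p - 1 = (p-2)+1 by ring,
      Real.rpow_add_one (by linarith : -x ≠ 0)]
    simp [Function.comp]; try ring
  · have hev : (fun s : ℝ => s ^ p) =ᶠ[nhds x] (fun s => |s| ^ p) := by
      filter_upwards [eventually_gt_nhds h] with s hs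
      rw [abs_of_pos hs]
    have h2 : HasDerivAt (fun t : ℝ => t ^ p) (p * x ^ (p-1)) x :=
      Real.hasDerivAt_rpow_const (Or.inl (ne_of_gt h))
    refine HasDerivAt.congr_of_eventuallyEq ?_ hev.symm
    convert h2 using 1 <;> try rfl
    rw [phi, abs_of_pos h, show p - 1 = (p-2)+1 by ring, Real.rpow_add_one (ne_of_gt h)]
    try ring

lemma young_aux (hp : 1 < p) {A B : ℝ} (hA : 0 ≤ A) (hB : 0 ≤ B) :
    p * (A * B ^ (p - 1)) ≤ A ^ p + (p - 1) * B ^ p := by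
  have hq : Real.HolderConjugate p (p / (p-1)) := Real.HolderConjugate.conjExponent hp
  have key := Real.young_inequality A (B ^ (p-1)) hq
  rw [abs_of_nonneg hA, abs_of_nonneg (Real.rpow_nonneg hB _), ← Real.rpow_mul hB] at key
  rw [show (p-1) * (p/(p-1)) = p by rw [mul_div_assoc']; rw [mul_comm]; rw [mul_div_assoc]; rw [div_self (by linarith : p - (1:ℝ) ≠ 0), mul_one]] at key
  have hp0 : (0:ℝ) < p := by linarith
  have hq0 : (0:ℝ) < p / (p-1) := div_pos (by linarith) (by linarith)
  have h1 : B ^ p / (p / (p-1)) = (p-1) * B ^ p / p := by field_simp; try ring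
  rw [h1] at key
  have := mul_le_mul_of_nonneg_left key hp0.le
  calc p * (A * B ^ (p-1)) ≤ p * (A ^ p / p + (p-1) * B ^ p / p) := this
  _ = A ^ p + (p-1) * B ^ p := by field_simp

end phiBasics


section helpers

lemma integral_hasDerivWithin {F : ℝ → ℝ} (hF : ContinuousOn F (Icc (0:ℝ) 1))
    {r : ℝ} (hr : r ∈ Icc (0:ℝ) 1) :
    HasDerivWithinAt (fun x => ∫ t in (0:ℝ)..x, F t) (F r) (Icc (0:ℝ) 1) r := by
  set Fe : ℝ → ℝ := fun x => F (max 0 (min 1 x)) with hFe_def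
  have hmem : ∀ x : ℝ, max 0 (min 1 x) ∈ Icc (0:ℝ) 1 :=
    fun x => ⟨le_max_left _ _, max_le (by norm_num) (min_le_left _ _)⟩
  have hFe : Continuous Fe := by
    apply hF.comp_continuous _ hmem
    exact continuous_const.max (continuous_const.min continuous_id)
  have heq : EqOn Fe F (Icc (0:ℝ) 1) := by
    intro x hx
    simp only [hFe_def]
    rw [min_eq_right hx.2, max_eq_right hx.1]
  have hd : HasDerivAt (fun x => ∫ t in (0:ℝ)..x, Fe t) (Fe r) r :=
    intervalIntegral.integral_hasDerivAt_right (hFe.intervalIntegrable _ _)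
      (hFe.stronglyMeasurable.stronglyMeasurableAtFilter) hFe.continuousAt
  have hcongr : ∀ x ∈ Icc (0:ℝ) 1, (∫ t in (0:ℝ)..x, Fe t) = ∫ t in (0:ℝ)..x, F t := by
    intro x hx
    apply intervalIntegral.integral_congr
    intro t ht
    rw [uIcc_of_le hx.1] at ht
    exact heq ⟨ht.1, ht.2.trans hx.2⟩
  have hres := hd.hasDerivWithinAt.congr (fun x hx => (hcongr x hx).symm) ((hcongr r hr).symm)
  rwa [heq hr] at hres

lemma integral_split {F : ℝ → ℝ} (hF : ContinuousOn F (Icc (0:ℝ) 1))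
    {a b : ℝ} (ha : a ∈ Icc (0:ℝ) 1) (hb : b ∈ Icc (0:ℝ) 1) :
    (∫ t in (0:ℝ)..b, F t) = (∫ t in (0:ℝ)..a, F t) + ∫ t in a..b, F t := by
  have key : ∀ x y : ℝ, x ∈ Icc (0:ℝ) 1 → y ∈ Icc (0:ℝ) 1 → IntervalIntegrable F volume x y := by
    intro x y hx hy
    apply ContinuousOn.intervalIntegrable
    apply hF.mono
    intro t ht
    rcases le_total x y with h | h
    · rw [uIcc_of_le h] at ht; exact ⟨hx.1.trans ht.1, ht.2.trans hy.2⟩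
    · rw [uIcc_of_ge h] at ht; exact ⟨hy.1.trans ht.1, ht.2.trans hx.2⟩
  rw [intervalIntegral.integral_add_adjacent_intervals (key 0 a ⟨le_refl 0, by norm_num⟩ ha)
    (key a b ha hb)]

lemma upgrade_deriv {f : ℝ → ℝ} {f' : ℝ} {x : ℝ} (hx : x ∈ Ioo (0:ℝ) 1)
    (hf : HasDerivWithinAt f f' (Icc (0:ℝ) 1) x) : HasDerivAt f f' x :=
  hf.hasDerivAt (Icc_mem_nhds hx.1 hx.2)

lemma monoOn_aux {f f' : ℝ → ℝ} {a b : ℝ}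
    (hf : ∀ x ∈ Icc a b, HasDerivWithinAt f (f' x) (Icc a b) x)
    (h0 : ∀ x ∈ Ioo a b, 0 ≤ f' x) : MonotoneOn f (Icc a b) := by
  apply monotoneOn_of_deriv_nonneg (convex_Icc a b)
  · exact fun x hx => (hf x hx).continuousWithinAt
  · rw [interior_Icc]
    intro x hx
    exact (((hf x (Ioo_subset_Icc_self hx)).hasDerivAt
      (Icc_mem_nhds hx.1 hx.2)).differentiableAt).differentiableWithinAt
  · rw [interior_Icc]
    intro x hx
    rw [((hf x (Ioo_subset_Icc_self hx)).hasDerivAt (Icc_mem_nhds hx.1 hx.2)).deriv]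
    exact h0 x hx

lemma antiOn_aux {f f' : ℝ → ℝ} {a b : ℝ}
    (hf : ∀ x ∈ Icc a b, HasDerivWithinAt f (f' x) (Icc a b) x)
    (h0 : ∀ x ∈ Ioo a b, f' x ≤ 0) : AntitoneOn f (Icc a b) := by
  have := monoOn_aux (f := fun x => -f x) (f' := fun x => -f' x)
    (fun x hx => (hf x hx).neg) (fun x hx => by simpa using h0 x hx)
  intro x hx y hy hxy
  have h2 := this hx hy hxy
  simp only at h2
  linarith

lemma strictMonoOn_aux {f f' : ℝ → ℝ} {a b : ℝ}
    (hf : ∀ x ∈ Icc a b, HasDerivWithinAt f (f' x) (Icc a b) x)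
    (h0 : ∀ x ∈ Ioo a b, 0 < f' x) : StrictMonoOn f (Icc a b) := by
  apply strictMonoOn_of_deriv_pos (convex_Icc a b)
  · exact fun x hx => (hf x hx).continuousWithinAt
  · rw [interior_Icc]
    intro x hx
    rw [((hf x (Ioo_subset_Icc_self hx)).hasDerivAt (Icc_mem_nhds hx.1 hx.2)).deriv]
    exact h0 x hx

lemma sign_const {g : ℝ → ℝ} {a b : ℝ} (hg : ContinuousOn g (Icc a b))
    (hne : ∀ r ∈ Ioo a b, g r ≠ 0) :
    (∀ r ∈ Ioo a b, 0 < g r) ∨ (∀ r ∈ Ioo a b, g r < 0) := by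
  by_cases hex : ∃ r ∈ Ioo a b, g r < 0
  · right
    obtain ⟨r2, hr2, hgr2⟩ := hex
    intro r hr
    rcases (hne r hr).lt_or_gt with h | h
    · exact h
    · exfalso
      rcases le_total r r2 with hle | hle
      · have hsub : Icc r r2 ⊆ Ioo a b := Icc_subset_Ioo hr.1 hr2.2
        have : (0:ℝ) ∈ Icc (g r2) (g r) ∨ (0:ℝ) ∈ Icc (g r) (g r2) := by
          left; exact ⟨hgr2.le, h.le⟩
        have := intermediate_value_Icc' hle (hg.mono (hsub.trans Ioo_subset_Icc_self)) ⟨hgr2.le, h.le⟩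
        obtain ⟨c, hc, hgc⟩ := this
        exact hne c (hsub hc) hgc
      · have hsub : Icc r2 r ⊆ Ioo a b := Icc_subset_Ioo hr2.1 hr.2
        have := intermediate_value_Icc hle (hg.mono (hsub.trans Ioo_subset_Icc_self)) ⟨hgr2.le, h.le⟩
        obtain ⟨c, hc, hgc⟩ := this
        exact hne c (hsub hc) hgc
  · left
    push_neg at hex
    intro r hr
    exact ((hne r hr).lt_or_gt).resolve_left (by exact not_lt.2 (hex r hr))

end helpers



/-- Bundled hypotheses on a solution in integrated form. -/
structure Sol (p : ℝ) (N : ℕ) (F z z' : ℝ → ℝ) : Prop where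
  deriv : ∀ r ∈ Icc (0:ℝ) 1, HasDerivWithinAt z (z' r) (Icc (0:ℝ) 1) r
  cont' : ContinuousOn z' (Icc (0:ℝ) 1)
  contF : ContinuousOn F (Icc (0:ℝ) 1)
  eqn : ∀ r ∈ Icc (0:ℝ) 1,
    r ^ (N - 1) * phi p (z' r) = (0:ℝ) ^ (N-1) * phi p (z' 0) - ∫ t in (0:ℝ)..r, F t
  d0 : z' 0 = 0

namespace Sol

variable {p : ℝ} {N : ℕ} {F z z' : ℝ → ℝ}

lemma cont (S : Sol p N F z z') : ContinuousOn z (Icc (0:ℝ) 1) :=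
  fun r hr => (S.deriv r hr).continuousWithinAt

lemma neg (S : Sol p N F z z') : Sol p N (fun t => -F t) (fun t => -z t) (fun t => -z' t) := by
  constructor
  · exact fun r hr => (S.deriv r hr).neg
  · exact S.cont'.neg
  · exact S.contF.neg
  · intro r hr
    have := S.eqn r hr
    rw [phi_neg, phi_neg, intervalIntegral.integral_neg]
    ring_nf
    ring_nf at this
    linarith
  · simp [S.d0]

/-- `r^(N-1) φ(z' r) = a^(N-1) φ(z' a) - ∫_a^r F`. -/
lemma between (S : Sol p N F z z') {a r : ℝ} (haI : a ∈ Icc (0:ℝ) 1) (hrI : r ∈ Icc (0:ℝ) 1) :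
    r ^ (N - 1) * phi p (z' r) = a ^ (N-1) * phi p (z' a) - ∫ t in a..r, F t := by
  have h1 := S.eqn r hrI
  have h2 := S.eqn a haI
  rw [integral_split S.contF haI hrI] at h1
  rw [h1, h2]; ring

lemma const_zero (S : Sol p N F z z') : (0:ℝ) ^ (N-1) * phi p (z' 0) = 0 := by
  rw [S.d0, phi_zero, mul_zero]

end Sol

section nondeg

lemma neBot_right {a b : ℝ} (hab : a < b) : (nhdsWithin b (Ioo a b)).NeBot := by
  rw [← mem_closure_iff_nhdsWithin_neBot, closure_Ioo hab.ne]
  exact ⟨hab.le, le_refl b⟩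

lemma neBot_left {a b : ℝ} (hab : a < b) : (nhdsWithin a (Ioo a b)).NeBot := by
  rw [← mem_closure_iff_nhdsWithin_neBot, closure_Ioo hab.ne]
  exact ⟨le_refl a, hab.le⟩

lemma Ioo_sub_Icc01 {a b : ℝ} (ha : 0 ≤ a) (hb : b ≤ 1) : Ioo a b ⊆ Icc (0:ℝ) 1 :=
  fun r hr => ⟨ha.trans hr.1.le, hr.2.le.trans hb⟩

/-- `F ≥ 0` on all of `[a, b]` (up to endpoints by continuity), given sign info on the hump. -/
lemma F_nonneg_closed {p : ℝ} {N : ℕ} {F z z' : ℝ → ℝ} (S : Sol p N F z z')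
    {a b : ℝ} (ha : 0 ≤ a) (hb : b ≤ 1) (hab : a < b)
    (hpos : ∀ r ∈ Ioo a b, 0 < z r)
    (hFzz : ∀ r ∈ Ioo a b, 0 ≤ F r * z r) :
    ∀ t ∈ Icc a b, 0 ≤ F t := by
  have hopen : ∀ t ∈ Ioo a b, 0 ≤ F t := by
    intro t ht
    by_contra hneg
    push_neg at hneg
    have := mul_neg_of_neg_of_pos hneg (hpos t ht)
    exact absurd (hFzz t ht) (by linarith)
  have hIccsub := Ioo_sub_Icc01 ha hb
  intro t ht
  rcases eq_or_lt_of_le ht.1 with h1 | h1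
  · -- t = a : limit from the right
    have hnb : (nhdsWithin a (Ioo a b)).NeBot := neBot_left hab
    rw [← h1]
    refine ge_of_tendsto (((S.contF a ⟨ha, hab.le.trans hb⟩).mono hIccsub).tendsto) ?_
    filter_upwards [self_mem_nhdsWithin] with x hx
    exact hopen x hx
  rcases eq_or_lt_of_le ht.2 with h2 | h2
  · -- t = b : limit from the left
    have hnb : (nhdsWithin b (Ioo a b)).NeBot := neBot_right hab
    rw [h2]
    refine ge_of_tendsto (((S.contF b ⟨ha.trans hab.le, hb⟩).mono hIccsub).tendsto) ?_
    filter_upwards [self_mem_nhdsWithin] with x hx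
    exact hopen x hx
  · exact hopen t ⟨h1, h2⟩

/-- right-endpoint nondegeneracy when `z > 0` on the hump. -/
lemma nondeg_right_pos {p : ℝ} (hp : 1 < p) {N : ℕ} {F z z' : ℝ → ℝ} (S : Sol p N F z z')
    {a b : ℝ} (ha : 0 ≤ a) (hb : b ≤ 1) (hab : a < b)
    (hpos : ∀ r ∈ Ioo a b, 0 < z r)
    (hFzz : ∀ r ∈ Ioo a b, 0 ≤ F r * z r) (hzb : z b = 0) : z' b < 0 := by
  have hbI : b ∈ Icc (0:ℝ) 1 := ⟨ha.trans hab.le, hb⟩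
  have haI : a ∈ Icc (0:ℝ) 1 := ⟨ha, hab.le.trans hb⟩
  have hIccsub := Ioo_sub_Icc01 ha hb
  have hneB : (nhdsWithin b (Ioo a b)).NeBot := neBot_right hab
  have hle : z' b ≤ 0 := by
    have hslope := (S.deriv b hbI)
    rw [hasDerivWithinAt_iff_tendsto_slope] at hslope
    have hslope' : Filter.Tendsto (slope z b) (nhdsWithin b (Ioo a b)) (nhds (z' b)) := by
      apply hslope.mono_left
      apply nhdsWithin_mono
      intro r hr
      exact ⟨hIccsub hr, by simp [hr.2.ne]⟩
    apply le_of_tendsto hslope'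
    filter_upwards [self_mem_nhdsWithin] with r hr
    rw [slope_def_field, hzb]
    exact div_nonpos_of_nonneg_of_nonpos (by linarith [hpos r hr]) (by linarith [hr.2])
  have hne : z' b ≠ 0 := by
    intro h0
    obtain ⟨r, hr⟩ : ∃ r, r ∈ Ioo a b := ⟨(a+b)/2, by rw [Set.mem_Ioo]; constructor <;> linarith⟩
    have hz'nonneg : ∀ s ∈ Ioo a b, 0 ≤ z' s := by
      intro s hs
      have hsI : s ∈ Icc (0:ℝ) 1 := hIccsub hs
      have key : s ^ (N-1) * phi p (z' s) = ∫ t in s..b, F t := by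
        have h1 := S.between hsI hbI
        rw [h0, phi_zero, mul_zero] at h1
        linarith
      have hint : 0 ≤ ∫ t in s..b, F t := by
        apply intervalIntegral.integral_nonneg hs.2.le
        intro t ht
        exact F_nonneg_closed S ha hb hab hpos hFzz t ⟨hs.1.le.trans ht.1, ht.2⟩
      have hpow : (0:ℝ) < s ^ (N-1) := pow_pos (ha.trans_lt hs.1) _
      have hφ : 0 ≤ phi p (z' s) := by
        by_contra hneg
        push_neg at hneg
        have := mul_neg_of_pos_of_neg hpow hneg
        rw [key] at this
        linarith
      exact (phi_nonneg_iff hp).1 hφ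
    -- monotone on [r, b], so z r ≤ z b = 0, contradiction
    have hmono : MonotoneOn z (Icc r b) := by
      apply monoOn_aux (f' := z')
      · intro x hx
        exact (S.deriv x ⟨(hIccsub hr).1.trans hx.1, hx.2.trans hb⟩).mono
          (Icc_subset_Icc (hIccsub hr).1 hb)
      · intro x hx
        exact hz'nonneg x ⟨hr.1.trans hx.1, hx.2⟩
    have := hmono ⟨le_refl r, hr.2.le⟩ ⟨hr.2.le, le_refl b⟩ hr.2.le
    rw [hzb] at this
    linarith [hpos r hr]
  exact lt_of_le_of_ne hle hne

end nondeg

section nondeg2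

variable {p : ℝ} {N : ℕ} {F z z' : ℝ → ℝ}

/-- left-endpoint nondegeneracy when `z > 0` on the hump. -/
lemma nondeg_left_pos (hp : 1 < p) (S : Sol p N F z z')
    {a b : ℝ} (ha : 0 ≤ a) (hb : b ≤ 1) (hab : a < b)
    (hpos : ∀ r ∈ Ioo a b, 0 < z r)
    (hFzz : ∀ r ∈ Ioo a b, 0 ≤ F r * z r) (hza : z a = 0) : 0 < z' a := by
  have hbI : b ∈ Icc (0:ℝ) 1 := ⟨ha.trans hab.le, hb⟩
  have haI : a ∈ Icc (0:ℝ) 1 := ⟨ha, hab.le.trans hb⟩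
  have hIccsub := Ioo_sub_Icc01 ha hb
  have hneB : (nhdsWithin a (Ioo a b)).NeBot := neBot_left hab
  have hle : 0 ≤ z' a := by
    have hslope := (S.deriv a haI)
    rw [hasDerivWithinAt_iff_tendsto_slope] at hslope
    have hslope' : Filter.Tendsto (slope z a) (nhdsWithin a (Ioo a b)) (nhds (z' a)) := by
      apply hslope.mono_left
      apply nhdsWithin_mono
      intro r hr
      exact ⟨hIccsub hr, by simp [(hr.1.ne').symm]; exact hr.1.ne'⟩
    apply ge_of_tendsto hslope'
    filter_upwards [self_mem_nhdsWithin] with r hr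
    rw [slope_def_field, hza]
    have := hpos r hr
    have h2 : 0 < r - a := by linarith [hr.1]
    exact div_nonneg (by linarith) (by linarith)
  have hne : z' a ≠ 0 := by
    intro h0
    obtain ⟨r, hr⟩ : ∃ r, r ∈ Ioo a b := ⟨(a+b)/2, by rw [Set.mem_Ioo]; constructor <;> linarith⟩
    have hz'nonpos : ∀ s ∈ Ioo a b, z' s ≤ 0 := by
      intro s hs
      have hsI : s ∈ Icc (0:ℝ) 1 := hIccsub hs
      have key : s ^ (N-1) * phi p (z' s) = - ∫ t in a..s, F t := by
        have h1 := S.between haI hsI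
        rw [h0, phi_zero, mul_zero, zero_sub] at h1
        linarith
      have hint : 0 ≤ ∫ t in a..s, F t := by
        apply intervalIntegral.integral_nonneg hs.1.le
        intro t ht
        exact F_nonneg_closed S ha hb hab hpos hFzz t ⟨ht.1, ht.2.trans hs.2.le⟩
      have hpow : (0:ℝ) < s ^ (N-1) := pow_pos (ha.trans_lt hs.1) _
      have hφ : phi p (z' s) ≤ 0 := by
        by_contra hneg
        push_neg at hneg
        have := mul_pos hpow hneg
        rw [key] at this
        linarith
      exact (phi_nonpos_iff hp).1 hφ
    have hanti : AntitoneOn z (Icc a r) := by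
      apply antiOn_aux (f' := z')
      · intro x hx
        exact (S.deriv x ⟨ha.trans hx.1, hx.2.trans (hr.2.le.trans hb)⟩).mono
          (Icc_subset_Icc ha (hr.2.le.trans hb))
      · intro x hx
        exact hz'nonpos x ⟨hx.1, hx.2.trans hr.2⟩
    have := hanti ⟨le_refl a, hr.1.le⟩ ⟨hr.1.le, le_refl r⟩ hr.1.le
    rw [hza] at this
    linarith [hpos r hr]
  exact (lt_of_le_of_ne hle (Ne.symm hne))

lemma lower_bound_right_pos (hp : 1 < p) (S : Sol p N F z z')
    {a b : ℝ} (ha : 0 ≤ a) (hb : b ≤ 1) (hab : a < b)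
    (hpos : ∀ r ∈ Ioo a b, 0 < z r)
    (hFzz : ∀ r ∈ Ioo a b, 0 ≤ F r * z r) (hzb : z b = 0) :
    ∃ c > 0, ∀ᶠ r in nhdsWithin b (Ioo a b), c * (b - r) ≤ |z r| := by
  have hbI : b ∈ Icc (0:ℝ) 1 := ⟨ha.trans hab.le, hb⟩
  have hIccsub := Ioo_sub_Icc01 ha hb
  have hz'b : z' b < 0 := nondeg_right_pos hp S ha hb hab hpos hFzz hzb
  refine ⟨-z' b / 2, by linarith, ?_⟩
  -- an open set where z' < z' b / 2
  have hev : ∀ᶠ x in nhdsWithin b (Icc (0:ℝ) 1), z' x < z' b / 2 :=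
    ((S.cont' b hbI).tendsto).eventually (eventually_lt_nhds (by linarith))
  rw [Filter.eventually_iff, mem_nhdsWithin] at hev
  obtain ⟨U, hUopen, hbU, hU⟩ := hev
  obtain ⟨δ, hδpos, hball⟩ := Metric.isOpen_iff.1 hUopen b hbU
  have hmain : ∀ r ∈ Ioo a b, b - δ < r → (-z' b / 2) * (b - r) ≤ |z r| := by
    intro r hr hrδ
    have hrb : r < b := hr.2
    set c := -z' b / 2 with hc
    have hcpos : 0 < c := by rw [hc]; linarith
    -- the function x ↦ z x + c * x is antitone on [r, b]
    have hanti : AntitoneOn (fun x => z x + c * x) (Icc r b) := by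
      apply antiOn_aux (f' := fun x => z' x + c)
      · intro x hx
        refine HasDerivWithinAt.add ?_ ?_
        · exact (S.deriv x ⟨(hIccsub hr).1.trans hx.1, hx.2.trans hb⟩).mono
            (Icc_subset_Icc (hIccsub hr).1 hb)
        · simpa using ((hasDerivAt_id x).const_mul c).hasDerivWithinAt
      · intro x hx
        have hxI : x ∈ Icc (0:ℝ) 1 := ⟨(hIccsub hr).1.trans hx.1.le, hx.2.le.trans hb⟩
        have hxU : x ∈ U := by
          apply hball
          rw [Metric.mem_ball, Real.dist_eq, abs_of_nonpos (by linarith [hx.2])]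
          linarith [hx.1]
        have := hU ⟨hxU, hxI⟩
        simp only [Set.mem_setOf_eq] at this
        linarith
    have h2 := hanti ⟨le_refl r, hrb.le⟩ ⟨hrb.le, le_refl b⟩ hrb.le
    simp only at h2
    rw [hzb] at h2
    rw [abs_of_pos (hpos r hr)]
    linarith
  filter_upwards [self_mem_nhdsWithin,
    mem_nhdsWithin_of_mem_nhds (Ioi_mem_nhds (show b - δ < b by linarith))] with r hr hr'
  exact hmain r hr hr'

lemma lower_bound_left_pos (hp : 1 < p) (S : Sol p N F z z')
    {a b : ℝ} (ha : 0 ≤ a) (hb : b ≤ 1) (hab : a < b)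
    (hpos : ∀ r ∈ Ioo a b, 0 < z r)
    (hFzz : ∀ r ∈ Ioo a b, 0 ≤ F r * z r) (hza : z a = 0) :
    ∃ c > 0, ∀ᶠ r in nhdsWithin a (Ioo a b), c * (r - a) ≤ |z r| := by
  have haI : a ∈ Icc (0:ℝ) 1 := ⟨ha, hab.le.trans hb⟩
  have hIccsub := Ioo_sub_Icc01 ha hb
  have hz'a : 0 < z' a := nondeg_left_pos hp S ha hb hab hpos hFzz hza
  refine ⟨z' a / 2, by linarith, ?_⟩
  have hev : ∀ᶠ x in nhdsWithin a (Icc (0:ℝ) 1), z' a / 2 < z' x :=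
    ((S.cont' a haI).tendsto).eventually (eventually_gt_nhds (by linarith))
  rw [Filter.eventually_iff, mem_nhdsWithin] at hev
  obtain ⟨U, hUopen, haU, hU⟩ := hev
  obtain ⟨δ, hδpos, hball⟩ := Metric.isOpen_iff.1 hUopen a haU
  have hmain : ∀ r ∈ Ioo a b, r < a + δ → (z' a / 2) * (r - a) ≤ |z r| := by
    intro r hr hrδ
    set c := z' a / 2 with hc
    have hcpos : 0 < c := by rw [hc]; linarith
    have hmono : MonotoneOn (fun x => z x - c * x) (Icc a r) := by
      apply monoOn_aux (f' := fun x => z' x - c)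
      · intro x hx
        refine HasDerivWithinAt.sub ?_ ?_
        · exact (S.deriv x ⟨ha.trans hx.1, hx.2.trans ((hIccsub hr).2)⟩).mono
            (Icc_subset_Icc ha ((hIccsub hr).2))
        · simpa using ((hasDerivAt_id x).const_mul c).hasDerivWithinAt
      · intro x hx
        have hxI : x ∈ Icc (0:ℝ) 1 := ⟨ha.trans hx.1.le, hx.2.le.trans (hIccsub hr).2⟩
        have hxU : x ∈ U := by
          apply hball
          rw [Metric.mem_ball, Real.dist_eq, abs_of_nonneg (by linarith [hx.1])]
          linarith [hx.2]
        have := hU ⟨hxU, hxI⟩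
        simp only [Set.mem_setOf_eq] at this
        linarith
    have h2 := hmono ⟨le_refl a, hr.1.le⟩ ⟨hr.1.le, le_refl r⟩ hr.1.le
    simp only at h2
    rw [hza] at h2
    rw [abs_of_pos (hpos r hr)]
    linarith
  filter_upwards [self_mem_nhdsWithin,
    mem_nhdsWithin_of_mem_nhds (Iio_mem_nhds (show a < a + δ by linarith))] with r hr hr'
  exact hmain r hr hr'

end nondeg2

section wrappers

variable {p : ℝ} {N : ℕ} {F z z' : ℝ → ℝ}

lemma neg_transport {a b : ℝ} (hneg : ∀ r ∈ Ioo a b, z r < 0) :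
    ∀ r ∈ Ioo a b, 0 < (fun t => -z t) r := fun r hr => by simpa using hneg r hr

lemma neg_Fzz {a b : ℝ} (hFzz : ∀ r ∈ Ioo a b, 0 ≤ F r * z r) :
    ∀ r ∈ Ioo a b, 0 ≤ (fun t => -F t) r * (fun t => -z t) r := fun r hr => by
  simpa using hFzz r hr

lemma lower_bound_right (hp : 1 < p) (S : Sol p N F z z')
    {a b : ℝ} (ha : 0 ≤ a) (hb : b ≤ 1) (hab : a < b)
    (hzne : ∀ r ∈ Ioo a b, z r ≠ 0)
    (hFzz : ∀ r ∈ Ioo a b, 0 ≤ F r * z r) (hzb : z b = 0) :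
    ∃ c > 0, ∀ᶠ r in nhdsWithin b (Ioo a b), c * (b - r) ≤ |z r| := by
  rcases sign_const (S.cont.mono (Icc_subset_Icc ha hb)) hzne with hpos | hneg
  · exact lower_bound_right_pos hp S ha hb hab hpos hFzz hzb
  · obtain ⟨c, hc, hev⟩ := lower_bound_right_pos hp S.neg ha hb hab
      (neg_transport hneg) (neg_Fzz hFzz) (by simp [hzb])
    refine ⟨c, hc, ?_⟩
    filter_upwards [hev] with r hr
    simpa using hr

lemma lower_bound_left (hp : 1 < p) (S : Sol p N F z z')
    {a b : ℝ} (ha : 0 ≤ a) (hb : b ≤ 1) (hab : a < b)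
    (hzne : ∀ r ∈ Ioo a b, z r ≠ 0)
    (hFzz : ∀ r ∈ Ioo a b, 0 ≤ F r * z r) (hza : z a = 0) :
    ∃ c > 0, ∀ᶠ r in nhdsWithin a (Ioo a b), c * (r - a) ≤ |z r| := by
  rcases sign_const (S.cont.mono (Icc_subset_Icc ha hb)) hzne with hpos | hneg
  · exact lower_bound_left_pos hp S ha hb hab hpos hFzz hza
  · obtain ⟨c, hc, hev⟩ := lower_bound_left_pos hp S.neg ha hb hab
      (neg_transport hneg) (neg_Fzz hFzz) (by simp [hza])
    refine ⟨c, hc, ?_⟩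
    filter_upwards [hev] with r hr
    simpa using hr

/-- a solution in integrated form with `z'(0) = 0` cannot vanish at `0`
while staying nonzero on `(0,b)` with the sign condition. -/
lemma z_zero_ne (hp : 1 < p) (S : Sol p N F z z')
    {b : ℝ} (hb : b ≤ 1) (h0b : 0 < b)
    (hzne : ∀ r ∈ Ioo (0:ℝ) b, z r ≠ 0)
    (hFzz : ∀ r ∈ Ioo (0:ℝ) b, 0 ≤ F r * z r) : z 0 ≠ 0 := by
  intro hz0
  rcases sign_const (S.cont.mono (Icc_subset_Icc (le_refl 0) hb)) hzne with hpos | hneg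
  · have := nondeg_left_pos hp S (le_refl 0) hb h0b hpos hFzz hz0
    rw [S.d0] at this
    linarith
  · have := nondeg_left_pos hp S.neg (le_refl 0) hb h0b
      (neg_transport hneg) (neg_Fzz hFzz) (by simp [hz0])
    simp [S.d0] at this

/-- `F` cannot vanish identically on a hump of `y`. -/
lemma hump_F_ne_aux (hp : 1 < p) (S : Sol p N F z z')
    {a b : ℝ} (ha : 0 ≤ a) (hb : b ≤ 1) (hab : a < b)
    (hyb : z b = 0) (hya : a = 0 ∨ z a = 0) (hyne : ∀ r ∈ Ioo a b, z r ≠ 0)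
    (hF0 : ∀ r ∈ Ioo a b, F r = 0) (hC : 0 ≤ a ^ (N-1) * phi p (z' a)) : False := by
  have haI : a ∈ Icc (0:ℝ) 1 := ⟨ha, hab.le.trans hb⟩
  have hbI : b ∈ Icc (0:ℝ) 1 := ⟨ha.trans hab.le, hb⟩
  have hIccsub := Ioo_sub_Icc01 ha hb
  -- F = 0 on the closed interval, by continuity
  have hF0' : ∀ t ∈ Icc a b, F t = 0 := by
    intro t ht
    rcases eq_or_lt_of_le ht.1 with h1 | h1
    · have hnb : (nhdsWithin a (Ioo a b)).NeBot := neBot_left hab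
      rw [← h1]
      refine tendsto_nhds_unique (((S.contF a haI).mono hIccsub).tendsto) ?_
      apply Filter.Tendsto.congr' _ tendsto_const_nhds
      filter_upwards [self_mem_nhdsWithin] with x hx
      exact (hF0 x hx).symm
    rcases eq_or_lt_of_le ht.2 with h2 | h2
    · have hnb : (nhdsWithin b (Ioo a b)).NeBot := neBot_right hab
      rw [h2]
      refine tendsto_nhds_unique (((S.contF b hbI).mono hIccsub).tendsto) ?_
      apply Filter.Tendsto.congr' _ tendsto_const_nhds
      filter_upwards [self_mem_nhdsWithin] with x hx
      exact (hF0 x hx).symm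
    · exact hF0 t ⟨h1, h2⟩
  -- the quantity r^(N-1) φ(z' r) is constant = C on [a,b]
  set C := a ^ (N-1) * phi p (z' a) with hCdef
  have hconst : ∀ r ∈ Icc a b, r ^ (N-1) * phi p (z' r) = C := by
    intro r hr
    have hrI : r ∈ Icc (0:ℝ) 1 := ⟨ha.trans hr.1, hr.2.trans hb⟩
    have h1 := S.between haI hrI
    have h2 : (∫ t in a..r, F t) = 0 := by
      rw [intervalIntegral.integral_congr (g := fun _ => (0:ℝ))]
      · simp
      · intro t ht
        rw [uIcc_of_le hr.1] at ht
        exact hF0' t ⟨ht.1, ht.2.trans hr.2⟩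
    rw [h2] at h1
    rw [h1]; ring
  rcases eq_or_lt_of_le hC with hC0 | hCpos
  · -- C = 0 : z' vanishes on the hump, so z is constant ⇒ z ≡ 0
    obtain ⟨r, hr⟩ : ∃ r, r ∈ Ioo a b := ⟨(a+b)/2, by rw [Set.mem_Ioo]; constructor <;> linarith⟩
    have hz'0 : ∀ s ∈ Ioo a b, z' s = 0 := by
      intro s hs
      have := hconst s (Ioo_subset_Icc_self hs)
      rw [← hC0] at this
      have hpow : (0:ℝ) < s ^ (N-1) := pow_pos (ha.trans_lt hs.1) _
      have hφ : phi p (z' s) = 0 := by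
        rcases mul_eq_zero.1 this with h | h
        · exact absurd h hpow.ne'
        · exact h
      exact (phi_eq_zero_iff hp).1 hφ
    have hmono : MonotoneOn z (Icc r b) := by
      apply monoOn_aux (f' := z')
      · intro x hx
        exact (S.deriv x ⟨(hIccsub hr).1.trans hx.1, hx.2.trans hb⟩).mono
          (Icc_subset_Icc (hIccsub hr).1 hb)
      · intro x hx; rw [hz'0 x ⟨hr.1.trans hx.1, hx.2⟩]
    have hanti : AntitoneOn z (Icc r b) := by
      apply antiOn_aux (f' := z')
      · intro x hx
        exact (S.deriv x ⟨(hIccsub hr).1.trans hx.1, hx.2.trans hb⟩).mono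
          (Icc_subset_Icc (hIccsub hr).1 hb)
      · intro x hx; rw [hz'0 x ⟨hr.1.trans hx.1, hx.2⟩]
    have h1 := hmono ⟨le_refl r, hr.2.le⟩ ⟨hr.2.le, le_refl b⟩ hr.2.le
    have h2 := hanti ⟨le_refl r, hr.2.le⟩ ⟨hr.2.le, le_refl b⟩ hr.2.le
    have : z r = 0 := by rw [hyb] at h1 h2; linarith
    exact hyne r hr this
  · -- C > 0 : z strictly increasing, contradiction with boundary zeros
    have hz'pos : ∀ s ∈ Ioo a b, 0 < z' s := by
      intro s hs
      have := hconst s (Ioo_subset_Icc_self hs)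
      have hpow : (0:ℝ) < s ^ (N-1) := pow_pos (ha.trans_lt hs.1) _
      have hφ : 0 < phi p (z' s) := by nlinarith
      exact (phi_pos_iff hp).1 hφ
    have hsm : StrictMonoOn z (Icc a b) := by
      apply strictMonoOn_aux (f' := z')
      · intro x hx
        exact (S.deriv x ⟨ha.trans hx.1, hx.2.trans hb⟩).mono (Icc_subset_Icc ha hb)
      · exact hz'pos
    rcases hya with h0 | hza
    · -- a = 0 : C = 0 since z' 0 = 0
      rw [hCdef, h0, S.d0, phi_zero, mul_zero] at hCpos
      linarith
    · obtain ⟨r, hr⟩ : ∃ r, r ∈ Ioo a b := ⟨(a+b)/2, by rw [Set.mem_Ioo]; constructor <;> linarith⟩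
      have h1 := hsm ⟨le_refl a, hab.le⟩ (Ioo_subset_Icc_self hr) hr.1
      have h2 := hsm (Ioo_subset_Icc_self hr) ⟨hab.le, le_refl b⟩ hr.2
      rw [hza] at h1
      rw [hyb] at h2
      linarith

lemma hump_F_ne (hp : 1 < p) (S : Sol p N F z z')
    {a b : ℝ} (ha : 0 ≤ a) (hb : b ≤ 1) (hab : a < b)
    (hyb : z b = 0) (hya : a = 0 ∨ z a = 0) (hyne : ∀ r ∈ Ioo a b, z r ≠ 0)
    (hF0 : ∀ r ∈ Ioo a b, F r = 0) : False := by
  rcases le_total 0 (a ^ (N-1) * phi p (z' a)) with hC | hC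
  · exact hump_F_ne_aux hp S ha hb hab hyb hya hyne hF0 hC
  · apply hump_F_ne_aux hp S.neg ha hb hab (by simp [hyb])
      (hya.imp id (fun h => by simp [h]))
      (fun r hr => by simpa using hyne r hr) (fun r hr => by simp [hF0 r hr])
    simp only [phi_neg]
    linarith

end wrappers



/-- The Picone-type derivative identity, abstract pointwise version. -/
lemma D_hasDerivAt {p : ℝ} (hp : 1 < p)
    {Gy Gz y z y' z' : ℝ → ℝ} {Fy Fz : ℝ → ℝ} {G : ℝ} {r : ℝ}
    (hY : HasDerivAt y (y' r) r) (hZ : HasDerivAt z (z' r) r)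
    (hGY : HasDerivAt Gy (-Fy r) r) (hGZ : HasDerivAt Gz (-Fz r) r)
    (hyr : y r ≠ 0) (hzr : z r ≠ 0)
    (hGyeq : Gy r = G * phi p (y' r)) (hGzeq : Gz r = G * phi p (z' r)) :
    HasDerivAt (fun s => Gy s * y s - Gz s * (|y s| ^ p / phi p (z s)))
      ((Fz r * z r * (|y r| ^ p / |z r| ^ p) - Fy r * y r)
        + G * ( |y' r| ^ p
              - p * (phi p (z' r) * phi p (y r) * y' r) / phi p (z r)
              + (p-1) * (|y r| ^ p * |z' r| ^ p / |z r| ^ p) )) r := by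
  have hCne : phi p (z r) ≠ 0 := fun h => hzr ((phi_eq_zero_iff hp).1 h)
  have habs : HasDerivAt (fun s => |y s| ^ p) ((p * phi p (y r)) * y' r) r :=
    (hasDerivAt_abs_rpow' hp hyr).comp r hY
  have hphiz : HasDerivAt (fun s => phi p (z s)) (((p-1) * |z r| ^ (p-2)) * z' r) r :=
    (hasDerivAt_phi hp hzr).comp r hZ
  have hquot := habs.div hphiz hCne
  have hD := (hGY.mul hY).sub (hGZ.mul hquot)
  convert hD using 1 <;> try rfl
  rw [hGyeq, hGzeq]
  simp only [Pi.div_apply]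
  have e1 : |z r| ^ p = phi p (z r) * z r := (phi_mul_self hp _).symm
  have e2 : |z' r| ^ p = phi p (z' r) * z' r := (phi_mul_self hp _).symm
  have e3 : |y' r| ^ p = phi p (y' r) * y' r := (phi_mul_self hp _).symm
  have e4 : phi p (z r) = |z r| ^ (p-2) * z r := rfl
  rw [e1, e2, e3, e4]
  have hwne : |z r| ^ (p-2) ≠ 0 := (Real.rpow_pos_of_pos (abs_pos.2 hzr) _).ne'
  field_simp
  ring


lemma bracket_nonneg {p : ℝ} (hp : 1 < p) {yv zv y'v z'v : ℝ}
    (hyv : yv ≠ 0) (hzv : zv ≠ 0) :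
    0 ≤ |y'v| ^ p - p * (phi p z'v * phi p yv * y'v) / phi p zv
        + (p-1) * (|yv| ^ p * |z'v| ^ p / |zv| ^ p) := by
  set A := |y'v| with hA
  set B := |z'v| * |yv| / |zv| with hB
  have hAnn : 0 ≤ A := abs_nonneg _
  have hBnn : 0 ≤ B := by
    apply div_nonneg (mul_nonneg (abs_nonneg _) (abs_nonneg _)) (abs_nonneg _)
  have hzabs : (0:ℝ) < |zv| := abs_pos.2 hzv
  have hyoung := young_aux hp hAnn hBnn
  have hBp1 : B ^ (p-1) = |z'v| ^ (p-1) * |yv| ^ (p-1) / |zv| ^ (p-1) := by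
    rw [hB, Real.div_rpow (mul_nonneg (abs_nonneg _) (abs_nonneg _)) (abs_nonneg _),
      Real.mul_rpow (abs_nonneg _) (abs_nonneg _)]
  have hBp : B ^ p = |z'v| ^ p * |yv| ^ p / |zv| ^ p := by
    rw [hB, Real.div_rpow (mul_nonneg (abs_nonneg _) (abs_nonneg _)) (abs_nonneg _),
      Real.mul_rpow (abs_nonneg _) (abs_nonneg _)]
  have hmid : |p * (phi p z'v * phi p yv * y'v) / phi p zv| = p * (A * B ^ (p-1)) := by
    rw [abs_div, abs_mul, abs_mul, abs_mul, abs_phi hp, abs_phi hp, abs_phi hp,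
      abs_of_pos (by linarith : (0:ℝ) < p), hBp1, hA]
    field_simp
    try ring
    try tauto
  have h1 : - (p * (A * B ^ (p-1))) ≤ - (p * (phi p z'v * phi p yv * y'v) / phi p zv) := by
    rw [← hmid]
    exact neg_le_neg (le_abs_self _)
  have hApabs : |y'v| ^ p = A ^ p := by rw [hA]
  have hlast : (p-1) * (|yv| ^ p * |z'v| ^ p / |zv| ^ p) = (p-1) * B ^ p := by
    rw [hBp]; ring
  rw [hApabs, hlast]
  linarith

lemma part1_le {p : ℝ} (hp : 1 < p) {Λ Fz yv zv : ℝ} (hyv : yv ≠ 0) (hzv : zv ≠ 0)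
    (hC2 : Λ * |zv| ^ p ≤ Fz * zv) :
    Λ * |yv| ^ p ≤ Fz * zv * (|yv| ^ p / |zv| ^ p) := by
  have hYp : (0:ℝ) < |yv| ^ p := Real.rpow_pos_of_pos (abs_pos.2 hyv) _
  have hZp : (0:ℝ) < |zv| ^ p := Real.rpow_pos_of_pos (abs_pos.2 hzv) _
  have h := mul_le_mul_of_nonneg_right hC2 (div_pos hYp hZp).le
  calc Λ * |yv| ^ p = Λ * |zv| ^ p * (|yv| ^ p / |zv| ^ p) := by field_simp; try ring
  _ ≤ Fz * zv * (|yv| ^ p / |zv| ^ p) := h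

lemma part1_lt {p : ℝ} (hp : 1 < p) {Λ Fz yv zv : ℝ} (hyv : yv ≠ 0) (hzv : zv ≠ 0)
    (hC2 : Λ * |zv| ^ p < Fz * zv) :
    Λ * |yv| ^ p < Fz * zv * (|yv| ^ p / |zv| ^ p) := by
  have hYp : (0:ℝ) < |yv| ^ p := Real.rpow_pos_of_pos (abs_pos.2 hyv) _
  have hZp : (0:ℝ) < |zv| ^ p := Real.rpow_pos_of_pos (abs_pos.2 hzv) _
  have h := mul_lt_mul_of_pos_right hC2 (div_pos hYp hZp)
  calc Λ * |yv| ^ p = Λ * |zv| ^ p * (|yv| ^ p / |zv| ^ p) := by field_simp; try ring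
  _ < Fz * zv * (|yv| ^ p / |zv| ^ p) := h

lemma Psi_nonneg {p : ℝ} (hp : 1 < p) {Fy Fz Λ yv zv y'v z'v G : ℝ}
    (hyv : yv ≠ 0) (hzv : zv ≠ 0) (hG : 0 ≤ G)
    (hC1 : Fy * yv ≤ Λ * |yv| ^ p) (hC2 : Λ * |zv| ^ p ≤ Fz * zv) :
    0 ≤ (Fz * zv * (|yv| ^ p / |zv| ^ p) - Fy * yv)
        + G * ( |y'v| ^ p - p * (phi p z'v * phi p yv * y'v) / phi p zv
              + (p-1) * (|yv| ^ p * |z'v| ^ p / |zv| ^ p) ) := by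
  have h1 := part1_le hp hyv hzv hC2
  have h2 := bracket_nonneg hp (yv := yv) (zv := zv) (y'v := y'v) (z'v := z'v) hyv hzv
  nlinarith [mul_nonneg hG h2]

lemma Psi_pos {p : ℝ} (hp : 1 < p) {Fy Fz Λ yv zv y'v z'v G : ℝ}
    (hyv : yv ≠ 0) (hzv : zv ≠ 0) (hG : 0 ≤ G)
    (hC1 : Fy * yv ≤ Λ * |yv| ^ p) (hC2 : Λ * |zv| ^ p ≤ Fz * zv)
    (hst : Fy * yv < Λ * |yv| ^ p ∨ Λ * |zv| ^ p < Fz * zv) :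
    0 < (Fz * zv * (|yv| ^ p / |zv| ^ p) - Fy * yv)
        + G * ( |y'v| ^ p - p * (phi p z'v * phi p yv * y'v) / phi p zv
              + (p-1) * (|yv| ^ p * |z'v| ^ p / |zv| ^ p) ) := by
  have h2 := bracket_nonneg hp (yv := yv) (zv := zv) (y'v := y'v) (z'v := z'v) hyv hzv
  have hGb := mul_nonneg hG h2
  rcases hst with h | h
  · have h1 := part1_le hp hyv hzv hC2
    nlinarith
  · have h1 := part1_lt hp hyv hzv h
    nlinarith

lemma D_bound_aux {p : ℝ} (hp : 1 < p) {Gyr Gzr yr zr d c L My Mz : ℝ}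
    (hd : 0 < d) (hc : 0 < c) (hL : 0 < L)
    (hy : |yr| ≤ L * d) (hz : c * d ≤ |zr|) (hzr : zr ≠ 0)
    (hGy : |Gyr| ≤ My) (hGz : |Gzr| ≤ Mz) :
    |Gyr * yr - Gzr * (|yr| ^ p / phi p zr)| ≤ (My * L + Mz * (L ^ p / c ^ (p-1))) * d := by
  have hMy0 : 0 ≤ My := (abs_nonneg _).trans hGy
  have hMz0 : 0 ≤ Mz := (abs_nonneg _).trans hGz
  have habs : |Gyr * yr - Gzr * (|yr| ^ p / phi p zr)|
      ≤ |Gyr * yr| + |Gzr * (|yr| ^ p / phi p zr)| := by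
    calc |Gyr * yr - Gzr * (|yr| ^ p / phi p zr)|
        = |Gyr * yr + -(Gzr * (|yr| ^ p / phi p zr))| := by rw [sub_eq_add_neg]
    _ ≤ |Gyr * yr| + |-(Gzr * (|yr| ^ p / phi p zr))| := abs_add_le _ _
    _ = |Gyr * yr| + |Gzr * (|yr| ^ p / phi p zr)| := by rw [abs_neg]
  have h1 : |Gyr * yr| ≤ My * (L * d) := by
    rw [abs_mul]
    exact mul_le_mul hGy hy (abs_nonneg _) hMy0
  have h2 : |Gzr * (|yr| ^ p / phi p zr)| ≤ Mz * ((L*d) ^ p / (c*d) ^ (p-1)) := by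
    rw [abs_mul]
    apply mul_le_mul hGz _ (abs_nonneg _) hMz0
    rw [abs_div, abs_phi hp, abs_of_nonneg (Real.rpow_nonneg (abs_nonneg yr) p)]
    apply div_le_div₀ (Real.rpow_nonneg (by positivity) p)
      (Real.rpow_le_rpow (abs_nonneg _) hy (by linarith))
      (Real.rpow_pos_of_pos (by positivity) _)
      (Real.rpow_le_rpow (by positivity) hz (by linarith))
  have hsimp : (L*d) ^ p / (c*d) ^ (p-1) = (L ^ p / c ^ (p-1)) * d := by
    rw [Real.mul_rpow hL.le hd.le, Real.mul_rpow hc.le hd.le,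
      show d ^ p = d ^ (p-1) * d by rw [← Real.rpow_add_one hd.ne']; congr 1; ring]
    have hdp : d ^ (p-1) ≠ 0 := (Real.rpow_pos_of_pos hd _).ne'
    have hcp : c ^ (p-1) ≠ 0 := (Real.rpow_pos_of_pos hc _).ne'
    field_simp
    try ring
  rw [hsimp] at h2
  calc |Gyr * yr - Gzr * (|yr| ^ p / phi p zr)| ≤ My * (L*d) + Mz * ((L ^ p / c ^ (p-1)) * d) := by
        linarith
  _ = (My * L + Mz * (L ^ p / c ^ (p-1))) * d := by ring





/-- The Sturm-Picone comparison on a hump: impossible configuration. -/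
lemma hump_compare {p : ℝ} (hp : 1 < p) {N : ℕ} {Fy Fz Λ y y' z z' : ℝ → ℝ}
    (Sy : Sol p N Fy y y') (Sz : Sol p N Fz z z')
    {a b : ℝ} (ha : 0 ≤ a) (hb : b ≤ 1) (hab : a < b)
    (hyb : y b = 0) (hya : a = 0 ∨ y a = 0)
    (hyne : ∀ r ∈ Ioo a b, y r ≠ 0)
    (hzne : ∀ r ∈ Ioo a b, z r ≠ 0)
    (hC1 : ∀ r ∈ Ioo a b, Fy r * y r ≤ Λ r * |y r| ^ p)
    (hC2 : ∀ r ∈ Ioo a b, Λ r * |z r| ^ p ≤ Fz r * z r)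
    (hFzz : ∀ r ∈ Ioo a b, 0 ≤ Fz r * z r)
    (hstrict : ∃ r₀ ∈ Ioo a b, Fy r₀ * y r₀ < Λ r₀ * |y r₀| ^ p
      ∨ Λ r₀ * |z r₀| ^ p < Fz r₀ * z r₀) :
    False := by
  have haI : a ∈ Icc (0:ℝ) 1 := ⟨ha, hab.le.trans hb⟩
  have hbI : b ∈ Icc (0:ℝ) 1 := ⟨ha.trans hab.le, hb⟩
  have hIccsub := Ioo_sub_Icc01 ha hb
  set Gy : ℝ → ℝ := fun x => (0:ℝ)^(N-1) * phi p (y' 0) - ∫ t in (0:ℝ)..x, Fy t with hGydef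
  set Gz : ℝ → ℝ := fun x => (0:ℝ)^(N-1) * phi p (z' 0) - ∫ t in (0:ℝ)..x, Fz t with hGzdef
  have hGyd : ∀ x ∈ Icc (0:ℝ) 1, HasDerivWithinAt Gy (-Fy x) (Icc (0:ℝ) 1) x :=
    fun x hx => (integral_hasDerivWithin Sy.contF hx).const_sub _
  have hGzd : ∀ x ∈ Icc (0:ℝ) 1, HasDerivWithinAt Gz (-Fz x) (Icc (0:ℝ) 1) x :=
    fun x hx => (integral_hasDerivWithin Sz.contF hx).const_sub _
  have hGyeq : ∀ x ∈ Icc (0:ℝ) 1, Gy x = x^(N-1) * phi p (y' x) :=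
    fun x hx => (Sy.eqn x hx).symm
  have hGzeq : ∀ x ∈ Icc (0:ℝ) 1, Gz x = x^(N-1) * phi p (z' x) :=
    fun x hx => (Sz.eqn x hx).symm
  have hGycont : ContinuousOn Gy (Icc (0:ℝ) 1) := fun x hx => (hGyd x hx).continuousWithinAt
  have hGzcont : ContinuousOn Gz (Icc (0:ℝ) 1) := fun x hx => (hGzd x hx).continuousWithinAt
  set D : ℝ → ℝ := fun s => Gy s * y s - Gz s * (|y s| ^ p / phi p (z s)) with hDdef
  set Ψ : ℝ → ℝ := fun r => (Fz r * z r * (|y r| ^ p / |z r| ^ p) - Fy r * y r)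
        + r^(N-1) * ( |y' r| ^ p
              - p * (phi p (z' r) * phi p (y r) * y' r) / phi p (z r)
              + (p-1) * (|y r| ^ p * |z' r| ^ p / |z r| ^ p) ) with hΨdef
  have hsub01 : ∀ r ∈ Ioo a b, r ∈ Ioo (0:ℝ) 1 :=
    fun r hr => ⟨ha.trans_lt hr.1, hr.2.trans_le hb⟩
  have hDd : ∀ r ∈ Ioo a b, HasDerivAt D (Ψ r) r := by
    intro r hr
    have hr01 := hsub01 r hr
    have hrI := hIccsub hr
    exact D_hasDerivAt hp (upgrade_deriv hr01 (Sy.deriv r hrI))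
      (upgrade_deriv hr01 (Sz.deriv r hrI)) (upgrade_deriv hr01 (hGyd r hrI))
      (upgrade_deriv hr01 (hGzd r hrI)) (hyne r hr) (hzne r hr)
      (hGyeq r hrI) (hGzeq r hrI)
  have hΨnn : ∀ r ∈ Ioo a b, 0 ≤ Ψ r := by
    intro r hr
    exact Psi_nonneg hp (hyne r hr) (hzne r hr)
      (pow_nonneg (ha.trans hr.1.le) _) (hC1 r hr) (hC2 r hr)
  have hmono : MonotoneOn D (Ioo a b) := by
    apply monotoneOn_of_deriv_nonneg (convex_Ioo a b)
    · exact fun r hr => (hDd r hr).continuousAt.continuousWithinAt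
    · rw [interior_Ioo]
      exact fun r hr => (hDd r hr).differentiableAt.differentiableWithinAt
    · rw [interior_Ioo]
      intro r hr
      rw [(hDd r hr).deriv]
      exact hΨnn r hr
  -- continuity of D within Icc at points where z ≠ 0
  have hcontD : ∀ e ∈ Icc (0:ℝ) 1, z e ≠ 0 → ContinuousWithinAt D (Icc (0:ℝ) 1) e := by
    intro e heI hze
    apply ContinuousWithinAt.sub
    · exact (hGycont e heI).mul (Sy.cont e heI)
    · apply (hGzcont e heI).mul
      apply ContinuousWithinAt.div
      · exact ((Sy.cont e heI).abs).rpow_const (Or.inr (by linarith))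
      · exact (continuous_phi hp).continuousAt.comp_continuousWithinAt (Sz.cont e heI)
      · exact fun h => hze ((phi_eq_zero_iff hp).1 h)
  -- bounds for the estimate cases
  obtain ⟨L0, hL0⟩ := isCompact_Icc.exists_bound_of_continuousOn Sy.cont'
  set L : ℝ := |L0| + 1 with hLdef
  have hLpos : 0 < L := by positivity
  have hL : ∀ x ∈ Icc (0:ℝ) 1, ‖y' x‖ ≤ L := fun x hx =>
    (hL0 x hx).trans (by rw [hLdef]; cases abs_cases L0 <;> linarith)
  obtain ⟨My0, hMy0⟩ := isCompact_Icc.exists_bound_of_continuousOn hGycont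
  set My : ℝ := |My0| + 1 with hMydef
  have hMy : ∀ x ∈ Icc (0:ℝ) 1, |Gy x| ≤ My := fun x hx =>
    (hMy0 x hx).trans (by rw [hMydef]; cases abs_cases My0 <;> linarith)
  obtain ⟨Mz0, hMz0⟩ := isCompact_Icc.exists_bound_of_continuousOn hGzcont
  set Mz : ℝ := |Mz0| + 1 with hMzdef
  have hMz : ∀ x ∈ Icc (0:ℝ) 1, |Gz x| ≤ Mz := fun x hx =>
    (hMz0 x hx).trans (by rw [hMzdef]; cases abs_cases Mz0 <;> linarith)
  -- MVT bound near zeros of y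
  have hyMVT : ∀ e ∈ Icc (0:ℝ) 1, y e = 0 → ∀ x ∈ Icc (0:ℝ) 1, |y x| ≤ L * |x - e| := by
    intro e heI hye x hxI
    have := Convex.norm_image_sub_le_of_norm_hasDerivWithin_le
      (fun s hs => Sy.deriv s hs) hL (convex_Icc (0:ℝ) 1) heI hxI
    rw [hye, sub_zero, Real.norm_eq_abs, Real.norm_eq_abs] at this
    exact this
  -- boundary limit at b
  have htb : Filter.Tendsto D (nhdsWithin b (Ioo a b)) (nhds 0) := by
    by_cases hzb : z b = 0
    · obtain ⟨c, hc, hev⟩ := lower_bound_right hp Sz ha hb hab hzne hFzz hzb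
      apply squeeze_zero_norm' (a := fun r => (My * L + Mz * (L ^ p / c ^ (p-1))) * (b - r))
      · filter_upwards [hev, self_mem_nhdsWithin] with r hrev hr
        have hrI := hIccsub hr
        have hbr : 0 < b - r := by linarith [hr.2]
        have hyr : |y r| ≤ L * (b - r) := by
          have := hyMVT b hbI hyb r hrI
          rwa [abs_of_nonpos (show r - b ≤ 0 by linarith), neg_sub] at this
        exact D_bound_aux hp hbr hc hLpos hyr hrev (hzne r hr) (hMy r hrI) (hMz r hrI)
      · have h0 : Filter.Tendsto (fun r : ℝ => (My * L + Mz * (L ^ p / c ^ (p-1))) * (b - r))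
            (nhds b) (nhds ((My * L + Mz * (L ^ p / c ^ (p-1))) * (b - b))) :=
          (tendsto_const_nhds.mul (tendsto_const_nhds.sub tendsto_id))
        rw [sub_self, mul_zero] at h0
        exact h0.mono_left nhdsWithin_le_nhds
    · have hD0 : D b = 0 := by
        simp only [hDdef, hyb, abs_zero]
        rw [Real.zero_rpow (by linarith : p ≠ 0)]
        simp
      have := (hcontD b hbI hzb).tendsto
      rw [hD0] at this
      exact this.mono_left (nhdsWithin_mono _ (fun r hr => hIccsub hr))
  -- boundary limit at a
  have hta : Filter.Tendsto D (nhdsWithin a (Ioo a b)) (nhds 0) := by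
    rcases hya with ha0 | hya0
    · -- a = 0 : z 0 ≠ 0 and D 0 = 0
      subst ha0
      have hz0 : z 0 ≠ 0 := z_zero_ne hp Sz hb hab hzne hFzz
      have hD0 : D 0 = 0 := by
        have hGy0 : Gy 0 = 0 := by
          rw [hGydef]
          simp only [intervalIntegral.integral_same]
          rw [Sy.const_zero, sub_zero]
        have hGz0 : Gz 0 = 0 := by
          rw [hGzdef]
          simp only [intervalIntegral.integral_same]
          rw [Sz.const_zero, sub_zero]
        simp only [hDdef, hGy0, hGz0, zero_mul, sub_zero]
      have := (hcontD 0 haI hz0).tendsto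
      rw [hD0] at this
      exact this.mono_left (nhdsWithin_mono _ (fun r hr => hIccsub hr))
    · by_cases hza : z a = 0
      · obtain ⟨c, hc, hev⟩ := lower_bound_left hp Sz ha hb hab hzne hFzz hza
        apply squeeze_zero_norm' (a := fun r => (My * L + Mz * (L ^ p / c ^ (p-1))) * (r - a))
        · filter_upwards [hev, self_mem_nhdsWithin] with r hrev hr
          have hrI := hIccsub hr
          have hbr : 0 < r - a := by linarith [hr.1]
          have hyr : |y r| ≤ L * (r - a) := by
            have := hyMVT a haI hya0 r hrI
            rwa [abs_of_nonneg (show (0:ℝ) ≤ r - a by linarith)] at this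
          exact D_bound_aux hp hbr hc hLpos hyr hrev (hzne r hr) (hMy r hrI) (hMz r hrI)
        · have h0 : Filter.Tendsto (fun r : ℝ => (My * L + Mz * (L ^ p / c ^ (p-1))) * (r - a))
              (nhds a) (nhds ((My * L + Mz * (L ^ p / c ^ (p-1))) * (a - a))) :=
            (tendsto_const_nhds.mul (tendsto_id.sub tendsto_const_nhds))
          rw [sub_self, mul_zero] at h0
          exact h0.mono_left nhdsWithin_le_nhds
      · have hD0 : D a = 0 := by
          simp only [hDdef, hya0, abs_zero]
          rw [Real.zero_rpow (by linarith : p ≠ 0)]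
          simp
        have := (hcontD a haI hza).tendsto
        rw [hD0] at this
        exact this.mono_left (nhdsWithin_mono _ (fun r hr => hIccsub hr))
  -- D vanishes identically on the hump
  have hD0 : ∀ r ∈ Ioo a b, D r = 0 := by
    intro r hr
    have hneA : (nhdsWithin a (Ioo a b)).NeBot := neBot_left hab
    have hneB : (nhdsWithin b (Ioo a b)).NeBot := neBot_right hab
    have hge : 0 ≤ D r := by
      by_contra hlt
      push_neg at hlt
      have hev1 : ∀ᶠ x in nhdsWithin a (Ioo a b), D r < D x :=
        hta.eventually (eventually_gt_nhds hlt)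
      have hev2 : ∀ᶠ x in nhdsWithin a (Ioo a b), x < r :=
        eventually_nhdsWithin_of_eventually_nhds (eventually_lt_nhds hr.1)
      obtain ⟨x, hx1, hx2, hx3⟩ := (hev1.and (hev2.and self_mem_nhdsWithin)).exists
      exact absurd (hmono hx3 hr hx2.le) (by linarith)
    have hle : D r ≤ 0 := by
      by_contra hlt
      push_neg at hlt
      have hev1 : ∀ᶠ x in nhdsWithin b (Ioo a b), D x < D r :=
        htb.eventually (eventually_lt_nhds hlt)
      have hev2 : ∀ᶠ x in nhdsWithin b (Ioo a b), r < x :=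
        eventually_nhdsWithin_of_eventually_nhds (eventually_gt_nhds hr.2)
      obtain ⟨x, hx1, hx2, hx3⟩ := (hev1.and (hev2.and self_mem_nhdsWithin)).exists
      exact absurd (hmono hr hx3 hx2.le) (by linarith)
    linarith
  -- strictness contradiction
  obtain ⟨r₀, hr₀, hst⟩ := hstrict
  have hpos : 0 < Ψ r₀ := Psi_pos hp (hyne r₀ hr₀) (hzne r₀ hr₀)
    (pow_nonneg (ha.trans hr₀.1.le) _) (hC1 r₀ hr₀) (hC2 r₀ hr₀) hst
  have hderiv0 : HasDerivAt D 0 r₀ := by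
    have hev : D =ᶠ[nhds r₀] (fun _ => 0) := by
      filter_upwards [Ioo_mem_nhds hr₀.1 hr₀.2] with x hx
      exact hD0 x hx
    exact (hasDerivAt_const r₀ (0:ℝ)).congr_of_eventuallyEq hev
  have := (hDd r₀ hr₀).unique hderiv0
  linarith


lemma count_lemma {Zy Zz : Set ℝ} (hZy : Zy.Finite) (hZz : Zz.Finite)
    (hZy1 : Zy ⊆ Ioo 0 1) (hZz1 : Zz ⊆ Ioo 0 1)
    (key : ∀ a b : ℝ, 0 ≤ a → b ≤ 1 → a < b → (a = 0 ∨ a ∈ Zy) → (b = 1 ∨ b ∈ Zy) →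
        (∀ r ∈ Ioo a b, r ∉ Zy) → ∃ r ∈ Ioo a b, r ∈ Zz) :
    Zy.ncard + 1 ≤ Zz.ncard := by
  classical
  set A : Set ℝ := insert (0:ℝ) (insert 1 Zy) with hA
  have hAfin : A.Finite := (hZy.insert 1).insert 0
  have hAmem : ∀ x ∈ A, 0 ≤ x ∧ x ≤ 1 := by
    intro x hx
    rcases hx with rfl | hx
    · norm_num
    rcases hx with rfl | hx
    · norm_num
    · exact ⟨(hZy1 hx).1.le, (hZy1 hx).2.le⟩
  have hkey2 : ∀ a : ℝ, ∃ r : ℝ, a ∈ A \ {1} →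
      r ∈ Zz ∧ a < r ∧ r < sInf (A ∩ Ioi a) := by
    intro a
    by_cases haA : a ∈ A \ {1}
    · obtain ⟨haA', ha1⟩ := haA
      have ha1' : a ≠ 1 := by simpa using ha1
      have ha01 := hAmem a haA'
      have halt1 : a < 1 := lt_of_le_of_ne ha01.2 ha1'
      have hSne : (A ∩ Ioi a).Nonempty := ⟨1, Or.inr (Or.inl rfl), halt1⟩
      have hSfin : (A ∩ Ioi a).Finite := hAfin.subset inter_subset_left
      have hbS : sInf (A ∩ Ioi a) ∈ A ∩ Ioi a := hSne.csInf_mem hSfin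
      set b := sInf (A ∩ Ioi a) with hbdef
      have hab : a < b := hbS.2
      have hb1 : b ≤ 1 := (hAmem b hbS.1).2
      have hnoA : ∀ r ∈ Ioo a b, r ∉ Zy := by
        intro r hr hrZ
        have hmem : r ∈ A ∩ Ioi a := ⟨Or.inr (Or.inr hrZ), hr.1⟩
        exact absurd hr.2 (not_lt.2 (csInf_le hSfin.bddBelow hmem))
      have haZ : a = 0 ∨ a ∈ Zy := by
        rcases haA' with rfl | h
        · exact Or.inl rfl
        rcases h with rfl | h
        · exact absurd rfl ha1'
        · exact Or.inr h
      have hbZ : b = 1 ∨ b ∈ Zy := by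
        rcases hbS.1 with h | h
        · exfalso; rw [h] at hab; linarith [ha01.1]
        rcases h with h | h
        · exact Or.inl h
        · exact Or.inr h
      obtain ⟨r, hr, hrZz⟩ := key a b ha01.1 hb1 hab haZ hbZ hnoA
      exact ⟨r, fun _ => ⟨hrZz, hr.1, hr.2⟩⟩
    · exact ⟨0, fun h => absurd h haA⟩
  choose g hg using hkey2
  have hinj : InjOn g (A \ {1}) := by
    intro a1 h1 a2 h2 heq
    by_contra hne
    rcases lt_or_gt_of_ne hne with hlt | hlt
    · have k1 := hg a1 h1
      have k2 := hg a2 h2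
      have h2A : a2 ∈ A ∩ Ioi a1 := ⟨h2.1, hlt⟩
      have hSfin : (A ∩ Ioi a1).Finite := hAfin.subset inter_subset_left
      have := csInf_le hSfin.bddBelow h2A
      have : g a1 < g a2 := lt_of_lt_of_le k1.2.2 (this.trans k2.2.1.le)
      exact this.ne heq
    · have k1 := hg a1 h1
      have k2 := hg a2 h2
      have h1A : a1 ∈ A ∩ Ioi a2 := ⟨h1.1, hlt⟩
      have hSfin : (A ∩ Ioi a2).Finite := hAfin.subset inter_subset_left
      have := csInf_le hSfin.bddBelow h1A
      have : g a2 < g a1 := lt_of_lt_of_le k2.2.2 (this.trans k1.2.1.le)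
      exact this.ne heq.symm
  have himg : g '' (A \ {1}) ⊆ Zz := by
    rintro x ⟨a, ha, rfl⟩
    exact (hg a ha).1
  have h0Zy : (0:ℝ) ∉ Zy := fun h => by simpa using (hZy1 h).1
  have h1Zy : (1:ℝ) ∉ Zy := fun h => by simpa using (hZy1 h).2
  have hAset : A \ {1} = insert 0 Zy := by
    ext x
    simp only [hA, mem_diff, mem_insert_iff, mem_singleton_iff]
    constructor
    · rintro ⟨h, hx1⟩
      rcases h with rfl | h
      · exact Or.inl rfl
      rcases h with rfl | h
      · exact absurd rfl hx1
      · exact Or.inr h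
    · rintro (rfl | h)
      · exact ⟨Or.inl rfl, by norm_num⟩
      · exact ⟨Or.inr (Or.inr h), fun hx => h1Zy (hx ▸ h)⟩
  have hcard1 : (A \ {1}).ncard = Zy.ncard + 1 := by
    rw [hAset, ncard_insert_of_notMem h0Zy hZy]
  calc Zy.ncard + 1 = (A \ {1}).ncard := hcard1.symm
  _ = (g '' (A \ {1})).ncard := (ncard_image_of_injOn hinj).symm
  _ ≤ Zz.ncard := ncard_le_ncard himg hZz

/-- Nonexistence observation (Section 4): if `m ≥ 0` and the nonlinearity
`γ f(s)/φ_p(s)` stays strictly between the consecutive positive eigenvalues `λ_k` and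
`λ_{k+1}` (whose eigenfunctions have exactly `k-1`, resp. `k`, zeros), then the problem
has no nontrivial solution with exactly `k-1` zeros nor with exactly `k` zeros. -/
theorem nonexistence_between_eigenvalues
    (p : ℝ) (hp : 1 < p) (N : ℕ) (hN : 1 ≤ N)
    (m : ℝ → ℝ) (hm : ContinuousOn m (Icc (0:ℝ) 1))
    (hmnonneg : ∀ r ∈ Icc (0:ℝ) 1, 0 ≤ m r)
    (hmne : ∃ r ∈ Icc (0:ℝ) 1, m r ≠ 0)
    (f : ℝ → ℝ) (hf : Continuous f) (hsign : ∀ s : ℝ, s ≠ 0 → 0 < f s * s)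
    (k : ℕ) (hk : 1 ≤ k) (lamk lamk1 : ℝ) (hlamkpos : 0 < lamk)
    (hlamk : ∃ u u' : ℝ → ℝ, IsEigenfunc p N m lamk u u' ∧
      {r ∈ Ioo (0:ℝ) 1 | u r = 0}.Finite ∧
      {r ∈ Ioo (0:ℝ) 1 | u r = 0}.ncard = k - 1)
    (hlamk1 : ∃ u u' : ℝ → ℝ, IsEigenfunc p N m lamk1 u u' ∧
      {r ∈ Ioo (0:ℝ) 1 | u r = 0}.Finite ∧
      {r ∈ Ioo (0:ℝ) 1 | u r = 0}.ncard = k)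
    (γ : ℝ) (hγ : 0 < γ)
    (hbetween : ∀ s : ℝ, s ≠ 0 →
      lamk < γ * f s / phi p s ∧ γ * f s / phi p s < lamk1) :
    ¬ ∃ u u' : ℝ → ℝ,
        (SolEq p N (fun t => γ * t ^ (N - 1) * m t * f (u t)) u u' ∧
          u' 0 = 0 ∧ u 1 = 0 ∧ ∃ r ∈ Icc (0:ℝ) 1, u r ≠ 0) ∧
        {r ∈ Ioo (0:ℝ) 1 | u r = 0}.Finite ∧
        ({r ∈ Ioo (0:ℝ) 1 | u r = 0}.ncard = k - 1 ∨
          {r ∈ Ioo (0:ℝ) 1 | u r = 0}.ncard = k) := by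
  rintro ⟨u, u', ⟨⟨hud, hu'c, hueq⟩, hu'0, hu1, -⟩, hufin, hucard⟩
  -- `f 0 = 0`
  have hfpos : ∀ s : ℝ, 0 < s → 0 < f s := by
    intro s hs
    by_contra hc
    push_neg at hc
    nlinarith [hsign s hs.ne']
  have hfneg : ∀ s : ℝ, s < 0 → f s < 0 := by
    intro s hs
    by_contra hc
    push_neg at hc
    nlinarith [hsign s hs.ne]
  have hf0 : f 0 = 0 := by
    have h1 : f 0 ≤ 0 := by
      have ht : Filter.Tendsto f (nhdsWithin 0 (Iio (0:ℝ))) (nhds (f 0)) :=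
        hf.continuousAt.tendsto.mono_left nhdsWithin_le_nhds
      apply le_of_tendsto ht
      filter_upwards [self_mem_nhdsWithin] with s hs
      exact (hfneg s hs).le
    have h2 : 0 ≤ f 0 := by
      have ht : Filter.Tendsto f (nhdsWithin 0 (Ioi (0:ℝ))) (nhds (f 0)) :=
        hf.continuousAt.tendsto.mono_left nhdsWithin_le_nhds
      apply ge_of_tendsto ht
      filter_upwards [self_mem_nhdsWithin] with s hs
      exact (hfpos s hs).le
    linarith
  -- the key pointwise inequalities
  have keyineq : ∀ s : ℝ, s ≠ 0 →
      lamk * |s| ^ p < γ * (f s * s) ∧ γ * (f s * s) < lamk1 * |s| ^ p := by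
    intro s hs
    obtain ⟨h1, h2⟩ := hbetween s hs
    have hφs : phi p s ≠ 0 := fun h => hs ((phi_eq_zero_iff hp).1 h)
    have hps : (0:ℝ) < |s| ^ p := Real.rpow_pos_of_pos (abs_pos.2 hs) p
    have hiden : γ * f s / phi p s * |s| ^ p = γ * (f s * s) := by
      rw [← phi_mul_self hp s]
      field_simp
      try ring
    constructor
    · have := mul_lt_mul_of_pos_right h1 hps
      rwa [hiden] at this
    · have := mul_lt_mul_of_pos_right h2 hps
      rwa [hiden] at this
  have hlamk1pos : 0 < lamk1 := by
    have := hbetween 1 one_ne_zero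
    rw [phi_one] at this
    obtain ⟨h1, h2⟩ := this
    linarith
  -- solution as a Sol
  have hucont : ContinuousOn u (Icc (0:ℝ) 1) := fun r hr => (hud r hr).continuousWithinAt
  set Fu : ℝ → ℝ := fun t => γ * t ^ (N - 1) * m t * f (u t) with hFudef
  have hFucont : ContinuousOn Fu (Icc (0:ℝ) 1) := by
    apply ContinuousOn.mul
    apply ContinuousOn.mul
    · exact (continuous_const.mul (continuous_pow _)).continuousOn
    · exact hm
    · exact hf.comp_continuousOn hucont
  have Su : Sol p N Fu u u' := ⟨hud, hu'c, hFucont, hueq, hu'0⟩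
  set Zu := {r ∈ Ioo (0:ℝ) 1 | u r = 0} with hZudef
  have hZuIoo : Zu ⊆ Ioo 0 1 := sep_subset _ _
  rcases hucard with hcase | hcase
  · -- `u` has `k-1` interior zeros : compare with the eigenfunction for `lamk`
    obtain ⟨w, w', ⟨⟨hwd, hw'c, hweq⟩, hw'0, hw1, -⟩, hwfin, hwcard⟩ := hlamk
    have hwcont : ContinuousOn w (Icc (0:ℝ) 1) := fun r hr => (hwd r hr).continuousWithinAt
    set Fw : ℝ → ℝ := fun t => lamk * m t * t ^ (N - 1) * phi p (w t) with hFwdef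
    have hFwcont : ContinuousOn Fw (Icc (0:ℝ) 1) := by
      apply ContinuousOn.mul
      apply ContinuousOn.mul
      · exact continuousOn_const.mul hm
      · exact (continuous_pow _).continuousOn
      · exact (continuous_phi hp).comp_continuousOn hwcont
    have Sw : Sol p N Fw w w' := ⟨hwd, hw'c, hFwcont, hweq, hw'0⟩
    set Zw := {r ∈ Ioo (0:ℝ) 1 | w r = 0} with hZwdef
    have hcount : Zw.ncard + 1 ≤ Zu.ncard := by
      apply count_lemma hwfin hufin (sep_subset _ _) (sep_subset _ _)
      intro a b ha hb hab haZ hbZ hno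
      by_contra hnoz
      push_neg at hnoz
      have hIoo01 : ∀ r ∈ Ioo a b, r ∈ Ioo (0:ℝ) 1 :=
        fun r hr => ⟨ha.trans_lt hr.1, hr.2.trans_le hb⟩
      have hune : ∀ r ∈ Ioo a b, u r ≠ 0 :=
        fun r hr h0 => (hnoz r hr) ⟨hIoo01 r hr, h0⟩
      have hwne : ∀ r ∈ Ioo a b, w r ≠ 0 :=
        fun r hr h0 => (hno r hr) ⟨hIoo01 r hr, h0⟩
      have hwb : w b = 0 := by
        rcases hbZ with rfl | hbz
        · exact hw1
        · exact hbz.2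
      have hwa : a = 0 ∨ w a = 0 := haZ.imp id (fun h => h.2)
      have hmnn : ∀ r ∈ Ioo a b, 0 ≤ m r * r ^ (N-1) :=
        fun r hr => mul_nonneg (hmnonneg r ⟨(hIoo01 r hr).1.le, (hIoo01 r hr).2.le⟩)
          (pow_nonneg (hIoo01 r hr).1.le _)
      have hC1 : ∀ r ∈ Ioo a b, Fw r * w r ≤ (lamk * m r * r ^ (N-1)) * |w r| ^ p := by
        intro r hr
        apply le_of_eq
        rw [hFwdef]
        simp only
        rw [← phi_mul_self hp (w r)]
        ring
      have hC2 : ∀ r ∈ Ioo a b, (lamk * m r * r ^ (N-1)) * |u r| ^ p ≤ Fu r * u r := by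
        intro r hr
        have hkey := (keyineq (u r) (hune r hr)).1
        calc (lamk * m r * r ^ (N-1)) * |u r| ^ p
            = (m r * r ^ (N-1)) * (lamk * |u r| ^ p) := by ring
        _ ≤ (m r * r ^ (N-1)) * (γ * (f (u r) * u r)) :=
            mul_le_mul_of_nonneg_left hkey.le (hmnn r hr)
        _ = Fu r * u r := by rw [hFudef]; simp only; ring
      have hFzz : ∀ r ∈ Ioo a b, 0 ≤ Fu r * u r := by
        intro r hr
        have : Fu r * u r = (m r * r ^ (N-1)) * (γ * (f (u r) * u r)) := by
          rw [hFudef]; simp only; ring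
        rw [this]
        exact mul_nonneg (hmnn r hr) (mul_nonneg hγ.le (hsign _ (hune r hr)).le)
      have hm0 : ∃ r₀ ∈ Ioo a b, 0 < m r₀ := by
        by_contra hm0n
        push_neg at hm0n
        refine hump_F_ne hp Sw ha hb hab hwb hwa hwne ?_
        intro r hr
        have : m r = 0 := le_antisymm (hm0n r hr)
          (hmnonneg r ⟨(hIoo01 r hr).1.le, (hIoo01 r hr).2.le⟩)
        rw [hFwdef]; simp only [this]; ring
      obtain ⟨r₀, hr₀, hmr₀⟩ := hm0
      refine hump_compare hp Sw Su ha hb hab hwb hwa hwne hune hC1 hC2 hFzz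
        ⟨r₀, hr₀, Or.inr ?_⟩
      have hkey := (keyineq (u r₀) (hune r₀ hr₀)).1
      have hmp : 0 < m r₀ * r₀ ^ (N-1) :=
        mul_pos hmr₀ (pow_pos (hIoo01 r₀ hr₀).1 _)
      calc (lamk * m r₀ * r₀ ^ (N-1)) * |u r₀| ^ p
          = (m r₀ * r₀ ^ (N-1)) * (lamk * |u r₀| ^ p) := by ring
      _ < (m r₀ * r₀ ^ (N-1)) * (γ * (f (u r₀) * u r₀)) :=
          mul_lt_mul_of_pos_left hkey hmp
      _ = Fu r₀ * u r₀ := by rw [hFudef]; simp only; ring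
    rw [hwcard, hcase] at hcount
    omega
  · -- `u` has `k` interior zeros : compare with the eigenfunction for `lamk1`
    obtain ⟨v, v', ⟨⟨hvd, hv'c, hveq⟩, hv'0, hv1, -⟩, hvfin, hvcard⟩ := hlamk1
    have hvcont : ContinuousOn v (Icc (0:ℝ) 1) := fun r hr => (hvd r hr).continuousWithinAt
    set Fv : ℝ → ℝ := fun t => lamk1 * m t * t ^ (N - 1) * phi p (v t) with hFvdef
    have hFvcont : ContinuousOn Fv (Icc (0:ℝ) 1) := by
      apply ContinuousOn.mul
      apply ContinuousOn.mul
      · exact continuousOn_const.mul hm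
      · exact (continuous_pow _).continuousOn
      · exact (continuous_phi hp).comp_continuousOn hvcont
    have Sv : Sol p N Fv v v' := ⟨hvd, hv'c, hFvcont, hveq, hv'0⟩
    set Zv := {r ∈ Ioo (0:ℝ) 1 | v r = 0} with hZvdef
    have hcount : Zu.ncard + 1 ≤ Zv.ncard := by
      apply count_lemma hufin hvfin (sep_subset _ _) (sep_subset _ _)
      intro a b ha hb hab haZ hbZ hno
      by_contra hnoz
      push_neg at hnoz
      have hIoo01 : ∀ r ∈ Ioo a b, r ∈ Ioo (0:ℝ) 1 :=
        fun r hr => ⟨ha.trans_lt hr.1, hr.2.trans_le hb⟩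
      have hvne : ∀ r ∈ Ioo a b, v r ≠ 0 :=
        fun r hr h0 => (hnoz r hr) ⟨hIoo01 r hr, h0⟩
      have hune : ∀ r ∈ Ioo a b, u r ≠ 0 :=
        fun r hr h0 => (hno r hr) ⟨hIoo01 r hr, h0⟩
      have hub : u b = 0 := by
        rcases hbZ with rfl | hbz
        · exact hu1
        · exact hbz.2
      have hua : a = 0 ∨ u a = 0 := haZ.imp id (fun h => h.2)
      have hmnn : ∀ r ∈ Ioo a b, 0 ≤ m r * r ^ (N-1) :=
        fun r hr => mul_nonneg (hmnonneg r ⟨(hIoo01 r hr).1.le, (hIoo01 r hr).2.le⟩)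
          (pow_nonneg (hIoo01 r hr).1.le _)
      have hC1 : ∀ r ∈ Ioo a b, Fu r * u r ≤ (lamk1 * m r * r ^ (N-1)) * |u r| ^ p := by
        intro r hr
        have hkey := (keyineq (u r) (hune r hr)).2
        calc Fu r * u r = (m r * r ^ (N-1)) * (γ * (f (u r) * u r)) := by
              rw [hFudef]; simp only; ring
        _ ≤ (m r * r ^ (N-1)) * (lamk1 * |u r| ^ p) :=
            mul_le_mul_of_nonneg_left hkey.le (hmnn r hr)
        _ = (lamk1 * m r * r ^ (N-1)) * |u r| ^ p := by ring
      have hC2 : ∀ r ∈ Ioo a b, (lamk1 * m r * r ^ (N-1)) * |v r| ^ p ≤ Fv r * v r := by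
        intro r hr
        apply le_of_eq
        rw [hFvdef]
        simp only
        rw [← phi_mul_self hp (v r)]
        ring
      have hFzz : ∀ r ∈ Ioo a b, 0 ≤ Fv r * v r := by
        intro r hr
        have heq2 : Fv r * v r = (lamk1 * (m r * r ^ (N-1))) * (phi p (v r) * v r) := by
          rw [hFvdef]; simp only; ring
        rw [heq2, phi_mul_self hp (v r)]
        exact mul_nonneg (mul_nonneg hlamk1pos.le (hmnn r hr))
          (Real.rpow_nonneg (abs_nonneg _) _)
      have hm0 : ∃ r₀ ∈ Ioo a b, 0 < m r₀ := by
        by_contra hm0n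
        push_neg at hm0n
        refine hump_F_ne hp Su ha hb hab hub hua hune ?_
        intro r hr
        have : m r = 0 := le_antisymm (hm0n r hr)
          (hmnonneg r ⟨(hIoo01 r hr).1.le, (hIoo01 r hr).2.le⟩)
        rw [hFudef]; simp only [this]; ring
      obtain ⟨r₀, hr₀, hmr₀⟩ := hm0
      refine hump_compare hp Su Sv ha hb hab hub hua hune hvne hC1 hC2 hFzz
        ⟨r₀, hr₀, Or.inl ?_⟩
      have hkey := (keyineq (u r₀) (hune r₀ hr₀)).2
      have hmp : 0 < m r₀ * r₀ ^ (N-1) :=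
        mul_pos hmr₀ (pow_pos (hIoo01 r₀ hr₀).1 _)
      calc Fu r₀ * u r₀ = (m r₀ * r₀ ^ (N-1)) * (γ * (f (u r₀) * u r₀)) := by
            rw [hFudef]; simp only; ring
      _ < (m r₀ * r₀ ^ (N-1)) * (lamk1 * |u r₀| ^ p) :=
          mul_lt_mul_of_pos_left hkey hmp
      _ = (lamk1 * m r₀ * r₀ ^ (N-1)) * |u r₀| ^ p := by ring
    rw [hcase, hvcard] at hcount
    omega
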